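/- For 0 < q < 1, v > -1 and the measure dμ(x) = e(−x⁶; q⁶) x^{2v+1} d_q x on {q^n : n ∈ ℤ}, the even moments s_{2n} satisfy lim_{n→∞} q^{n/4} s_{2n}^{1/(2n)} = 0. -/

import Mathlib

open Filter Real Topology

/-- Infinite q-Pochhammer symbol `(x; q)_∞ = ∏_{i≥0} (1 - q^i x)`. -/
noncomputable def qPochInf (x q : ℝ) : ℝ := ∏' i : ℕ, (1 - q ^ i * x)

lemma aux_multipliable {Q c : ℝ} (hQ0 : 0 ≤ Q) (hQ1 : Q < 1) (hc : 0 < c) :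
    Multipliable (fun i : ℕ => 1 + Q ^ i * c) := by
  have hpos : ∀ (_ : Unit) (i : ℕ), 0 < 1 + Q ^ i * c := by
    intro _ i
    have := mul_nonneg (pow_nonneg hQ0 i) hc.le
    linarith
  have hlog : ∀ (_ : Unit), Summable (fun i : ℕ => Real.log (1 + Q ^ i * c)) := by
    intro _
    apply Summable.of_nonneg_of_le
      (fun i => Real.log_nonneg (by linarith [mul_nonneg (pow_nonneg hQ0 i) hc.le]))
      (fun i => ?_)
      ((summable_geometric_of_lt_one hQ0 hQ1).mul_right c)
    have := Real.log_le_sub_one_of_pos (hpos () i)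
    linarith
  exact Real.multipliable_of_summable_log (hpos ()) (hlog ())

lemma aux_prod_le {Q c : ℝ} (hQ0 : 0 ≤ Q) (hQ1 : Q < 1) (hc : 0 < c) (m : ℕ) :
    ∏ i ∈ Finset.range m, (1 + Q ^ i * c) ≤ ∏' i : ℕ, (1 + Q ^ i * c) := by
  have hmul := aux_multipliable hQ0 hQ1 hc
  refine ge_of_tendsto hmul.hasProd.tendsto_prod_nat ?_
  filter_upwards [eventually_ge_atTop m] with N hN
  rw [← Finset.prod_range_mul_prod_Ico _ hN]
  have h1 : (1:ℝ) ≤ ∏ i ∈ Finset.Ico m N, (1 + Q ^ i * c) := by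
    have := Finset.prod_le_prod (f := fun _ : ℕ => (1:ℝ))
      (g := fun i : ℕ => 1 + Q ^ i * c) (s := Finset.Ico m N)
      (fun i _ => zero_le_one)
      (fun i _ => by show (1:ℝ) ≤ 1 + Q ^ i * c; linarith [mul_nonneg (pow_nonneg hQ0 i) hc.le])
    simpa using this
  have h2 : (0:ℝ) ≤ ∏ i ∈ Finset.range m, (1 + Q ^ i * c) :=
    Finset.prod_nonneg fun i _ => by linarith [mul_nonneg (pow_nonneg hQ0 i) hc.le]
  exact le_mul_of_one_le_right h2 h1

lemma poch_one_le {q : ℝ} (hq0 : 0 < q) (hq1 : q < 1) (k : ℤ) :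
    (1:ℝ) ≤ qPochInf (-((q ^ (k : ℤ)) ^ (6 : ℕ))) (q ^ (6 : ℕ)) := by
  have hQ0 : (0:ℝ) ≤ q ^ (6 : ℕ) := by positivity
  have hQ1 : q ^ (6 : ℕ) < 1 := pow_lt_one₀ hq0.le hq1 (by norm_num)
  have hx : (0:ℝ) < q ^ (k : ℤ) := zpow_pos hq0 k
  have hc : (0:ℝ) < (q ^ (k : ℤ)) ^ (6 : ℕ) := by positivity
  have hpoch : qPochInf (-((q ^ (k : ℤ)) ^ (6 : ℕ))) (q ^ (6 : ℕ))
      = ∏' i : ℕ, (1 + (q ^ (6 : ℕ)) ^ i * ((q ^ (k : ℤ)) ^ (6 : ℕ))) := by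
    simp [qPochInf, mul_neg, sub_neg_eq_add]
  rw [hpoch]
  simpa using aux_prod_le hQ0 hQ1 hc 0

lemma term_bound (q : ℝ) (hq0 : 0 < q) (hq1 : q < 1) (M : ℝ) (hM : 1 ≤ M) (k : ℤ) :
    (q ^ (k : ℤ)) ^ M / qPochInf (-((q ^ (k : ℤ)) ^ (6 : ℕ))) (q ^ (6 : ℕ))
      ≤ q ^ (-((M - 2) ^ 2 / 12)) * q ^ k.natAbs := by
  have hx : (0:ℝ) < q ^ (k : ℤ) := zpow_pos hq0 k
  have hQ0 : (0:ℝ) ≤ q ^ (6 : ℕ) := by positivity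
  have hQ1 : q ^ (6 : ℕ) < 1 := pow_lt_one₀ hq0.le hq1 (by norm_num)
  have hc : (0:ℝ) < (q ^ (k : ℤ)) ^ (6 : ℕ) := by positivity
  have hpoch : qPochInf (-((q ^ (k : ℤ)) ^ (6 : ℕ))) (q ^ (6 : ℕ))
      = ∏' i : ℕ, (1 + (q ^ (6 : ℕ)) ^ i * ((q ^ (k : ℤ)) ^ (6 : ℕ))) := by
    simp [qPochInf, mul_neg, sub_neg_eq_add]
  have hP1 : (1:ℝ) ≤ qPochInf (-((q ^ (k : ℤ)) ^ (6 : ℕ))) (q ^ (6 : ℕ)) := by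
    rw [hpoch]
    simpa using aux_prod_le hQ0 hQ1 hc 0
  have hDnonneg : (0:ℝ) ≤ (M - 2) ^ 2 / 12 := by positivity
  have hD1 : (1:ℝ) ≤ q ^ (-((M - 2) ^ 2 / 12)) :=
    Real.one_le_rpow_of_pos_of_le_one_of_nonpos hq0 hq1.le (by linarith)
  rcases le_or_gt 0 k with hk | hk
  · -- k ≥ 0
    have hx1 : q ^ (k : ℤ) ≤ 1 := by
      conv_lhs => rw [show k = (k.natAbs : ℤ) by omega, zpow_natCast]
      exact pow_le_one₀ hq0.le hq1.le
    have h1 : (q ^ (k : ℤ)) ^ M ≤ q ^ (k : ℤ) := by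
      calc (q ^ (k : ℤ)) ^ M ≤ (q ^ (k : ℤ)) ^ (1:ℝ) :=
            Real.rpow_le_rpow_of_exponent_ge hx hx1 hM
        _ = q ^ (k : ℤ) := Real.rpow_one _
    have h2 : q ^ (k : ℤ) = q ^ k.natAbs := by
      conv_lhs => rw [show k = (k.natAbs : ℤ) by omega, zpow_natCast]
    calc (q ^ (k : ℤ)) ^ M / qPochInf (-((q ^ (k : ℤ)) ^ (6 : ℕ))) (q ^ (6 : ℕ))
        ≤ (q ^ (k : ℤ)) ^ M := div_le_self (Real.rpow_nonneg hx.le M) hP1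
      _ ≤ q ^ (k : ℤ) := h1
      _ = q ^ k.natAbs := h2
      _ ≤ q ^ (-((M - 2) ^ 2 / 12)) * q ^ k.natAbs :=
          le_mul_of_one_le_left (by positivity) hD1
  · -- k < 0
    set m : ℕ := k.natAbs with hmdef
    have hm : 1 ≤ m := by omega
    have hkm : k = -(m : ℤ) := by omega
    have hfac : ∀ i ∈ Finset.range m,
        (q ^ (6 : ℕ)) ^ i * ((q ^ (k : ℤ)) ^ (6 : ℕ)) = q ^ (6 * (i : ℤ) + 6 * k) := by
      intro i _
      have e1 : (q ^ (6 : ℕ)) ^ i = q ^ ((6 * i : ℕ) : ℤ) := by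
        rw [← pow_mul, zpow_natCast]
      have e2 : (q ^ (k : ℤ)) ^ (6 : ℕ) = q ^ (k * 6) := by
        rw [← zpow_natCast (q ^ (k : ℤ)) 6, ← zpow_mul]
        norm_num
      rw [e1, e2, ← zpow_add₀ (ne_of_gt hq0)]
      congr 1
      omega
    have hz : ∀ z : ℤ, q ^ z = Real.exp (Real.log q * z) := fun z => by
      rw [← Real.rpow_intCast q z, Real.rpow_def_of_pos hq0]
    have hsum : (∑ i ∈ Finset.range m, (6 * (i : ℤ) + 6 * k)) = -3 * m ^ 2 - 3 * m := by
      have h2 : (∑ i ∈ Finset.range m, (i : ℤ)) * 2 = (m : ℤ) * ((m : ℤ) - 1) := by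
        have h3 := Finset.sum_range_id_mul_two m
        zify [hm] at h3
        exact_mod_cast h3
      rw [hkm, Finset.sum_add_distrib, ← Finset.mul_sum, Finset.sum_const, Finset.card_range,
        nsmul_eq_mul]
      linear_combination 3 * h2
    have hA : ∏ i ∈ Finset.range m, ((q ^ (6 : ℕ)) ^ i * ((q ^ (k : ℤ)) ^ (6 : ℕ)))
        = q ^ ((-3 * (m:ℤ) ^ 2 - 3 * m : ℤ)) := by
      rw [Finset.prod_congr rfl hfac]
      rw [Finset.prod_congr rfl (fun i (_ : i ∈ Finset.range m) => hz (6 * (i : ℤ) + 6 * k)),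
        ← Real.exp_sum, hz, ← Finset.mul_sum]
      congr 1
      have h4 := congrArg (fun z : ℤ => (z : ℝ)) hsum
      push_cast at h4 ⊢
      rw [h4]
    have hAP : q ^ ((-3 * (m:ℤ) ^ 2 - 3 * m : ℤ))
        ≤ qPochInf (-((q ^ (k : ℤ)) ^ (6 : ℕ))) (q ^ (6 : ℕ)) := by
      rw [hpoch, ← hA]
      refine le_trans (Finset.prod_le_prod (fun i _ => by positivity) (fun i _ => ?_))
        (aux_prod_le hQ0 hQ1 hc m)
      show (q ^ (6 : ℕ)) ^ i * ((q ^ (k : ℤ)) ^ (6 : ℕ))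
          ≤ 1 + (q ^ (6 : ℕ)) ^ i * ((q ^ (k : ℤ)) ^ (6 : ℕ))
      linarith
    have hApos : (0:ℝ) < q ^ ((-3 * (m:ℤ) ^ 2 - 3 * m : ℤ)) := zpow_pos hq0 _
    calc (q ^ (k : ℤ)) ^ M / qPochInf (-((q ^ (k : ℤ)) ^ (6 : ℕ))) (q ^ (6 : ℕ))
        ≤ (q ^ (k : ℤ)) ^ M / q ^ ((-3 * (m:ℤ) ^ 2 - 3 * m : ℤ)) :=
          div_le_div_of_nonneg_left (Real.rpow_nonneg hx.le M) hApos hAP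
      _ = q ^ ((k : ℝ) * M - ((-3 * (m:ℝ) ^ 2 - 3 * m))) := by
          rw [← Real.rpow_intCast q k, ← Real.rpow_mul hq0.le,
            ← Real.rpow_intCast q ((-3 * (m:ℤ) ^ 2 - 3 * m : ℤ)), ← Real.rpow_sub hq0]
          push_cast
          ring_nf
      _ ≤ q ^ (-((M - 2) ^ 2 / 12) + (m:ℝ)) := by
          apply Real.rpow_le_rpow_of_exponent_ge hq0 hq1.le
          have hkr : (k : ℝ) = -(m : ℝ) := by exact_mod_cast congrArg (Int.cast : ℤ → ℝ) hkm
          rw [hkr]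
          nlinarith [sq_nonneg (6 * (m:ℝ) - (M - 2))]
      _ = q ^ (-((M - 2) ^ 2 / 12)) * q ^ m := by
          rw [Real.rpow_add hq0, Real.rpow_natCast]


set_option maxHeartbeats 1000000 in
/-- For `dμ(x) = e(−x⁶; q⁶) x^{2v+1} d_q x`, `lim q^{n/4} s_{2n}^{1/(2n)} = 0`. -/
theorem q_exponential_weight_moment_condition (q v : ℝ) (hq0 : 0 < q) (hq1 : q < 1)
    (hv : -1 < v) (s : ℕ → ℝ)
    (hs : ∀ m : ℕ, s m = (1 - q) * ∑' k : ℤ,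
      (q ^ (k : ℤ)) ^ ((m : ℝ) + 2 * v + 2) / qPochInf (-((q ^ (k : ℤ)) ^ (6 : ℕ))) (q ^ (6 : ℕ))) :
    Tendsto (fun n : ℕ => q ^ ((n : ℝ) / 4) * (s (2 * n)) ^ ((2 * (n : ℝ))⁻¹))
      atTop (𝓝 0) := by
  have h1q : (0:ℝ) < 1 - q := by linarith
  -- nonnegativity of moments
  have hs_nonneg : ∀ N : ℕ, 0 ≤ s N := by
    intro N
    rw [hs N]
    refine mul_nonneg h1q.le (tsum_nonneg fun k => div_nonneg
      (Real.rpow_nonneg (zpow_pos hq0 k).le _) ?_)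
    linarith [poch_one_le hq0 hq1 k]
  -- geometric majorant over ℤ
  have hu_sum : Summable (fun k : ℤ => q ^ k.natAbs) := by
    apply Summable.of_nat_of_neg
    · exact (summable_geometric_of_lt_one hq0.le hq1).congr (fun n => by simp)
    · exact (summable_geometric_of_lt_one hq0.le hq1).congr (fun n => by simp)
  have htsum_u : ∑' k : ℤ, (q:ℝ) ^ k.natAbs ≤ 2 * (1 - q)⁻¹ := by
    have hgeo := summable_geometric_of_lt_one hq0.le hq1
    have hpos : Summable (fun n : ℕ => q ^ (n + 1)) := by
      apply hgeo.mul_right q |>.congr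
      intro n
      rw [pow_succ]
    have hNA : ∀ n : ℕ, ((-((n:ℤ) + 1)).natAbs) = n + 1 := fun n => by omega
    have h2 : Summable (fun n : ℕ => (q:ℝ) ^ ((-((n:ℤ) + 1)).natAbs)) :=
      hpos.congr (fun n => by rw [hNA n])
    have h1 : Summable (fun n : ℕ => (q:ℝ) ^ (((n:ℤ)).natAbs)) :=
      hgeo.congr (fun n => by simp)
    rw [tsum_of_nat_of_neg_add_one (f := fun k : ℤ => (q:ℝ) ^ k.natAbs) h1 h2]
    have e1 : ∑' n : ℕ, (q:ℝ) ^ ((n:ℤ)).natAbs = (1 - q)⁻¹ := by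
      rw [tsum_congr (fun n : ℕ => by simp : ∀ n : ℕ, (q:ℝ) ^ ((n:ℤ)).natAbs = q ^ n)]
      exact tsum_geometric_of_lt_one hq0.le hq1
    have e2 : ∑' n : ℕ, (q:ℝ) ^ ((-((n:ℤ) + 1)).natAbs) ≤ (1 - q)⁻¹ := by
      rw [tsum_congr (fun n : ℕ => by rw [hNA n])]
      calc ∑' n : ℕ, (q:ℝ) ^ (n + 1) ≤ ∑' n : ℕ, (q:ℝ) ^ n :=
            Summable.tsum_le_tsum (fun n => pow_le_pow_of_le_one hq0.le hq1.le (Nat.le_succ n)) hpos hgeo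
        _ = (1 - q)⁻¹ := tsum_geometric_of_lt_one hq0.le hq1
    linarith
  -- moment bound
  have hsbound : ∀ n : ℕ, 1 ≤ n →
      s (2 * n) ≤ 2 * q ^ (-((((2 * n : ℕ) : ℝ) + 2 * v + 2 - 2) ^ 2 / 12)) := by
    intro n hn
    set M : ℝ := ((2 * n : ℕ) : ℝ) + 2 * v + 2 with hMdef
    have hM : 1 ≤ M := by
      have : (1:ℝ) ≤ ((2 * n : ℕ) : ℝ) := by exact_mod_cast Nat.one_le_iff_ne_zero.mpr (by omega)
      simp only [hMdef]; linarith
    have hDpow : (0:ℝ) ≤ q ^ (-((M - 2) ^ 2 / 12)) := Real.rpow_nonneg hq0.le _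
    rw [hs (2 * n)]
    have hT : (∑' k : ℤ, (q ^ (k : ℤ)) ^ M /
        qPochInf (-((q ^ (k : ℤ)) ^ (6 : ℕ))) (q ^ (6 : ℕ)))
        ≤ q ^ (-((M - 2) ^ 2 / 12)) * (2 * (1 - q)⁻¹) := by
      apply tsum_le_of_sum_le'
      · positivity
      · intro F
        calc ∑ k ∈ F, (q ^ (k : ℤ)) ^ M / qPochInf (-((q ^ (k : ℤ)) ^ (6 : ℕ))) (q ^ (6 : ℕ))
            ≤ ∑ k ∈ F, q ^ (-((M - 2) ^ 2 / 12)) * q ^ k.natAbs :=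
              Finset.sum_le_sum (fun k _ => term_bound q hq0 hq1 M hM k)
          _ = q ^ (-((M - 2) ^ 2 / 12)) * ∑ k ∈ F, q ^ k.natAbs := by
              rw [Finset.mul_sum]
          _ ≤ q ^ (-((M - 2) ^ 2 / 12)) * ∑' k : ℤ, q ^ k.natAbs := by
              apply mul_le_mul_of_nonneg_left _ hDpow
              exact Summable.sum_le_tsum F (fun k _ => by positivity) hu_sum
          _ ≤ q ^ (-((M - 2) ^ 2 / 12)) * (2 * (1 - q)⁻¹) :=
              mul_le_mul_of_nonneg_left htsum_u hDpow
    calc (1 - q) * ∑' k : ℤ, (q ^ (k : ℤ)) ^ M /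
          qPochInf (-((q ^ (k : ℤ)) ^ (6 : ℕ))) (q ^ (6 : ℕ))
        ≤ (1 - q) * (q ^ (-((M - 2) ^ 2 / 12)) * (2 * (1 - q)⁻¹)) :=
          mul_le_mul_of_nonneg_left hT h1q.le
      _ = 2 * q ^ (-((M - 2) ^ 2 / 12)) := by
          field_simp
  -- final squeeze
  have hlim : Tendsto (fun n : ℕ => 2 * (q ^ ((1:ℝ)/24)) ^ n) atTop (𝓝 0) := by
    have := (tendsto_pow_atTop_nhds_zero_of_lt_one
      (Real.rpow_nonneg hq0.le ((1:ℝ)/24))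
      (Real.rpow_lt_one hq0.le hq1 (by norm_num))).const_mul (2:ℝ)
    simpa using this
  apply tendsto_of_tendsto_of_tendsto_of_le_of_le' tendsto_const_nhds hlim
  · exact Eventually.of_forall fun n =>
      mul_nonneg (Real.rpow_nonneg hq0.le _) (Real.rpow_nonneg (hs_nonneg _) _)
  · obtain ⟨N, hN⟩ := exists_nat_ge (max (16 * |v|) (16 * v ^ 2))
    filter_upwards [eventually_ge_atTop (N + 1)] with n hn
    have hn1 : (1:ℝ) ≤ (n:ℝ) := by exact_mod_cast Nat.one_le_iff_ne_zero.mpr (by omega)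
    have hnN : ((N:ℝ)) ≤ (n:ℝ) := by exact_mod_cast Nat.le_of_succ_le hn
    have h16v : 16 * |v| ≤ (n:ℝ) := le_trans (le_trans (le_max_left _ _) hN) hnN
    have h16v2 : 16 * v ^ 2 ≤ (n:ℝ) := le_trans (le_trans (le_max_right _ _) hN) hnN
    set nr : ℝ := (n:ℝ) with hnr
    have hM2 : (((2 * n : ℕ) : ℝ) + 2 * v + 2 - 2) = 2 * nr + 2 * v := by
      push_cast
      ring
    have hDval : -((((2 * n : ℕ) : ℝ) + 2 * v + 2 - 2) ^ 2 / 12)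
        = -((2 * nr + 2 * v) ^ 2 / 12) := by rw [hM2]
    have hinv_nonneg : (0:ℝ) ≤ (2 * nr)⁻¹ := by positivity
    have step1 : (s (2 * n)) ^ ((2 * nr)⁻¹)
        ≤ (2 * q ^ (-((2 * nr + 2 * v) ^ 2 / 12))) ^ ((2 * nr)⁻¹) := by
      apply Real.rpow_le_rpow (hs_nonneg _) _ hinv_nonneg
      rw [← hDval]
      exact hsbound n (by omega)
    have step2 : (2 * q ^ (-((2 * nr + 2 * v) ^ 2 / 12))) ^ ((2 * nr)⁻¹)
        = 2 ^ ((2 * nr)⁻¹) * q ^ (-((2 * nr + 2 * v) ^ 2 / 12) * (2 * nr)⁻¹) := by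
      rw [Real.mul_rpow (by norm_num) (Real.rpow_nonneg hq0.le _), ← Real.rpow_mul hq0.le]
    have h2le : (2:ℝ) ^ ((2 * nr)⁻¹) ≤ 2 := by
      calc (2:ℝ) ^ ((2 * nr)⁻¹) ≤ (2:ℝ) ^ (1:ℝ) := by
            apply Real.rpow_le_rpow_of_exponent_le one_le_two
            rw [inv_le_one_iff₀]
            right
            linarith
        _ = 2 := Real.rpow_one 2
    have hexp : nr / 24 ≤ nr / 4 + -((2 * nr + 2 * v) ^ 2 / 12) * (2 * nr)⁻¹ := by
      have hnrpos : (0:ℝ) < nr := by linarith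
      have heq : -((2 * nr + 2 * v) ^ 2 / 12) * (2 * nr)⁻¹
          = -((2 * nr + 2 * v) ^ 2 / (24 * nr)) := by
        ring
      rw [heq]
      have hkey : (2 * nr + 2 * v) ^ 2 / (24 * nr) ≤ 5 * nr / 24 := by
        rw [div_le_iff₀ (by positivity : (0:ℝ) < 24 * nr)]
        nlinarith [neg_abs_le v, le_abs_self v, sq_abs v, abs_nonneg v]
      linarith [hkey]
    have step3 : q ^ (nr / 4) * q ^ (-((2 * nr + 2 * v) ^ 2 / 12) * (2 * nr)⁻¹)
        ≤ q ^ (nr / 24) := by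
      rw [← Real.rpow_add hq0]
      exact Real.rpow_le_rpow_of_exponent_ge hq0 hq1.le hexp
    have hqn : q ^ (nr / 24) = (q ^ ((1:ℝ)/24)) ^ n := by
      rw [← Real.rpow_natCast (q ^ ((1:ℝ)/24)) n, ← Real.rpow_mul hq0.le]
      congr 1
      rw [hnr]
      ring
    calc q ^ ((n:ℝ) / 4) * (s (2 * n)) ^ ((2 * (n:ℝ))⁻¹)
        ≤ q ^ (nr / 4) * (2 * q ^ (-((2 * nr + 2 * v) ^ 2 / 12))) ^ ((2 * nr)⁻¹) :=
          mul_le_mul_of_nonneg_left step1 (Real.rpow_nonneg hq0.le _)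
      _ = 2 ^ ((2 * nr)⁻¹) *
            (q ^ (nr / 4) * q ^ (-((2 * nr + 2 * v) ^ 2 / 12) * (2 * nr)⁻¹)) := by
          rw [step2]; ring
      _ ≤ 2 * q ^ (nr / 24) := by
          apply mul_le_mul h2le step3 _ (by norm_num)
          positivity
      _ = 2 * (q ^ ((1:ℝ)/24)) ^ n := by rw [hqn]
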